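/- The polynomial de Rham complex of complete polynomial spaces on ℝ³, namely ℝ ⊆ P₃ →(grad) (P₂)³ →(curl) (P₁)³ →(div) P₀ → 0, is exact: the kernel of grad on P₃ is the constants, every curl-free vector field with components in P₂ is the gradient of a polynomial in P₃, every divergence-free vector field with components in P₁ is the curl of a vector field with components in P₂, and div : (P₁)³ → P₀ is surjective. -/

import Mathlib

open MvPolynomial

/-- Polynomials on ℝ³. -/
abbrev RP3 := MvPolynomial (Fin 3) ℝ

/-- Gradient of a polynomial on ℝ³. -/
noncomputable def pgrad (φ : RP3) : Fin 3 → RP3 := fun i => pderiv i φ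

/-- Curl of a polynomial vector field on ℝ³. -/
noncomputable def pcurl (v : Fin 3 → RP3) : Fin 3 → RP3 :=
  ![pderiv 1 (v 2) - pderiv 2 (v 1),
    pderiv 2 (v 0) - pderiv 0 (v 2),
    pderiv 0 (v 1) - pderiv 1 (v 0)]

/-- Divergence of a polynomial vector field on ℝ³. -/
noncomputable def pdiv (v : Fin 3 → RP3) : RP3 := ∑ i, pderiv i (v i)

noncomputable def Dop (p : RP3) : RP3 := ∑ i, X i * pderiv i p
def degF (m : Fin 3 →₀ ℕ) : ℕ := ∑ i, m i

lemma degF_le {p : RP3} {m} (h : m ∈ p.support) : degF m ≤ p.totalDegree := by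
  have := le_totalDegree h
  rwa [Finsupp.sum_fintype _ _ (fun _ => rfl)] at this

lemma Dop_monomial (m : Fin 3 →₀ ℕ) (c : ℝ) :
    Dop (monomial m c) = monomial m ((degF m : ℝ) * c) := by
  unfold Dop degF
  have : ∀ i : Fin 3, X i * pderiv i (monomial m c) = monomial m (c * (m i : ℝ)) := by
    intro i
    rw [pderiv_monomial, X, monomial_mul, one_mul]
    by_cases h : m i = 0
    · have : c * ((m i : ℕ) : ℝ) = 0 := by rw [h]; push_cast; ring
      rw [this, map_zero, map_zero]
    · have hidx : (Finsupp.single i 1 + (m - Finsupp.single i 1)) = m := by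
        ext j
        rw [Finsupp.add_apply, Finsupp.tsub_apply]
        rcases eq_or_ne i j with rfl | hj
        · rw [Finsupp.single_eq_same]; omega
        · rw [Finsupp.single_eq_of_ne (Ne.symm hj)]; omega
      rw [hidx]
  simp only [this]
  rw [← map_sum (monomial m)]
  congr 1
  push_cast
  rw [Finset.sum_mul]
  exact Finset.sum_congr rfl fun i _ => mul_comm _ _

lemma Dop_add (p q : RP3) : Dop (p + q) = Dop p + Dop q := by
  simp [Dop, map_add, mul_add, Finset.sum_add_distrib]

lemma Dop_sub (p q : RP3) : Dop (p - q) = Dop p - Dop q := by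
  simp [Dop, map_sub, mul_sub, Finset.sum_sub_distrib]

lemma coeff_Dop (p : RP3) (m : Fin 3 →₀ ℕ) :
    coeff m (Dop p) = (degF m : ℝ) * coeff m p := by
  induction p using MvPolynomial.induction_on' with
  | monomial s a =>
    rw [Dop_monomial, coeff_monomial, coeff_monomial]
    by_cases h : s = m
    · subst h; simp
    · simp [h]
  | add p q hp hq => rw [Dop_add, coeff_add, coeff_add, hp, hq, mul_add]

lemma support_Dop (p : RP3) : (Dop p).support ⊆ p.support := by
  intro m hm
  rw [mem_support_iff] at hm ⊢
  intro h
  rw [coeff_Dop, h, mul_zero] at hm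
  exact hm rfl

lemma totalDegree_Dop_le (p : RP3) : (Dop p).totalDegree ≤ p.totalDegree :=
  Finset.sup_mono (support_Dop p)

lemma totalDegree_pderiv_le (i : Fin 3) {p : RP3} {n : ℕ} (h : p.totalDegree ≤ n + 1) :
    (pderiv i p).totalDegree ≤ n := by
  conv_lhs => rw [p.as_sum]
  rw [map_sum]
  refine (totalDegree_finset_sum _ _).trans (Finset.sup_le fun m hm => ?_)
  rw [pderiv_monomial]
  by_cases hmi : m i = 0
  · have : coeff m p * ((m i : ℕ) : ℝ) = 0 := by rw [hmi]; push_cast; ring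
    rw [this, map_zero, totalDegree_zero]
    exact Nat.zero_le n
  · refine (totalDegree_monomial_le _ _).trans ?_
    rw [Finsupp.sum_fintype _ _ (fun _ => rfl)]
    have hd : degF m ≤ n + 1 := le_trans (degF_le hm) h
    unfold degF at hd
    simp only [Finsupp.tsub_apply, id_eq]
    have hle : ∀ j ∈ Finset.univ, Finsupp.single i 1 j ≤ m j := by
      intro j _
      rcases eq_or_ne i j with rfl | hj
      · rw [Finsupp.single_eq_same]; omega
      · rw [Finsupp.single_eq_of_ne (Ne.symm hj)]; omega
    rw [Finset.sum_tsub_distrib Finset.univ hle]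
    have hsingle : ∑ j, Finsupp.single i 1 j = 1 := by
      rw [Finset.sum_eq_single i]
      · rw [Finsupp.single_eq_same]
      · intro b _ hb; rw [Finsupp.single_eq_of_ne hb]
      · intro h; exact absurd (Finset.mem_univ i) h
    rw [hsingle]
    have hone : 1 ≤ ∑ j, m j := le_trans (Nat.one_le_iff_ne_zero.mpr hmi)
      (Finset.single_le_sum (f := fun j => m j) (fun _ _ => Nat.zero_le _) (Finset.mem_univ i))
    omega

lemma pd_comm (i j : Fin 3) (p : RP3) :
    pderiv i (pderiv j p) = pderiv j (pderiv i p) := by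
  induction p using MvPolynomial.induction_on' with
  | monomial s a =>
    rcases eq_or_ne i j with rfl | hij
    · rfl
    · rw [pderiv_monomial, pderiv_monomial, pderiv_monomial, pderiv_monomial]
      have h1 := Finsupp.tsub_apply s (Finsupp.single j 1) i
      rw [Finsupp.single_eq_of_ne hij, Nat.sub_zero] at h1
      have h2 := Finsupp.tsub_apply s (Finsupp.single i 1) j
      rw [Finsupp.single_eq_of_ne (Ne.symm hij), Nat.sub_zero] at h2
      have h3 : s - Finsupp.single j 1 - Finsupp.single i 1
          = s - Finsupp.single i 1 - Finsupp.single j 1 := by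
        ext k
        simp only [Finsupp.tsub_apply]
        omega
      rw [h1, h2, h3]
      ring_nf
  | add p q hp hq => rw [map_add, map_add, map_add, map_add, hp, hq]

/-- The annihilator identity in degree ≤ 1. -/
lemma Dop_sq {p : RP3} (h : p.totalDegree ≤ 1) : Dop (Dop p) = Dop p := by
  apply MvPolynomial.ext
  intro m
  rw [coeff_Dop, coeff_Dop]
  by_cases hc : coeff m p = 0
  · simp [hc]
  · have hd : degF m ≤ 1 := le_trans (degF_le (mem_support_iff.mpr hc)) h
    interval_cases hdeg : degF m <;> norm_num

/-- The annihilator identity in degree ≤ 2. -/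
lemma Dop_cube {p : RP3} (h : p.totalDegree ≤ 2) :
    Dop (Dop (Dop p)) + 2 * Dop p = 3 * Dop (Dop p) := by
  have h2 : (2 : RP3) = C (2:ℝ) := (map_ofNat C 2).symm
  have h3 : (3 : RP3) = C (3:ℝ) := (map_ofNat C 3).symm
  apply MvPolynomial.ext
  intro m
  rw [h2, h3]
  simp only [coeff_add, coeff_C_mul, coeff_Dop]
  by_cases hc : coeff m p = 0
  · rw [hc]; ring
  · have hd : degF m ≤ 2 := le_trans (degF_le (mem_support_iff.mpr hc)) h
    interval_cases hdeg : degF m <;> norm_num <;> ring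

lemma Dop_C_mul (a : ℝ) (p : RP3) : Dop (C a * p) = C a * Dop p := by
  apply MvPolynomial.ext
  intro m
  rw [coeff_Dop, coeff_C_mul, coeff_C_mul, coeff_Dop]
  ring

lemma pderiv_sum_X_mul (v : Fin 3 → RP3)
    (hsym : ∀ a b, pderiv a (v b) = pderiv b (v a)) (j : Fin 3) :
    pderiv j (∑ i, X i * v i) = v j + Dop (v j) := by
  rw [map_sum]
  have key : ∀ i : Fin 3, pderiv j (X i * v i)
      = (if i = j then v i else 0) + X i * pderiv i (v j) := by
    intro i
    rw [pderiv_mul, hsym j i]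
    congr 1
    rcases eq_or_ne i j with rfl | hij
    · rw [if_pos rfl, pderiv_X_self, one_mul]
    · rw [if_neg hij, pderiv_X_of_ne hij, zero_mul]
  simp only [key]
  rw [Finset.sum_add_distrib, Finset.sum_ite_eq' Finset.univ j, if_pos (Finset.mem_univ j)]
  rfl

lemma pderiv_Dop (j : Fin 3) (p : RP3) :
    pderiv j (Dop p) = pderiv j p + Dop (pderiv j p) := by
  rw [Dop]
  exact pderiv_sum_X_mul (fun i => pderiv i p) (fun a b => pd_comm a b p) j

lemma pcurl_apply (u : Fin 3 → RP3) (k : Fin 3) :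
    pcurl u k = pderiv (k + 1) (u (k + 2)) - pderiv (k + 2) (u (k + 1)) := by
  fin_cases k <;> rfl

lemma grad_homotopy (v : Fin 3 → RP3) (hdeg : ∀ i, (v i).totalDegree ≤ 2)
    (hsym : ∀ a b, pderiv a (v b) = pderiv b (v a)) (j : Fin 3) :
    pderiv j (Dop (Dop (∑ i, X i * v i)) - 6 * Dop (∑ i, X i * v i)
      + 11 * (∑ i, X i * v i)) = 6 * v j := by
  have h2 : (2:RP3) = C (2:ℝ) := (map_ofNat C 2).symm
  have h6 : (6:RP3) = C (6:ℝ) := (map_ofNat C 6).symm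
  have h11 : (11:RP3) = C (11:ℝ) := (map_ofNat C 11).symm
  have e1 : pderiv j (∑ i, X i * v i) = v j + Dop (v j) := pderiv_sum_X_mul v hsym j
  rw [map_add, map_sub, h6, h11, pderiv_C_mul, pderiv_C_mul, ← h6, ← h11,
    pderiv_Dop, pderiv_Dop, e1]
  simp only [Dop_add]
  linear_combination Dop_cube (hdeg j)

noncomputable def pcross (v : Fin 3 → RP3) : Fin 3 → RP3 :=
  ![v 1 * X 2 - v 2 * X 1, v 2 * X 0 - v 0 * X 2, v 0 * X 1 - v 1 * X 0]

lemma curl_cross (v : Fin 3 → RP3)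
    (hdiv : pderiv 0 (v 0) + pderiv 1 (v 1) + pderiv 2 (v 2) = 0) (k : Fin 3) :
    pcurl (pcross v) k = 2 * v k + Dop (v k) := by
  have pd01 : pderiv (0:Fin 3) (X (1:Fin 3) : RP3) = 0 := pderiv_X_of_ne (by decide)
  have pd02 : pderiv (0:Fin 3) (X (2:Fin 3) : RP3) = 0 := pderiv_X_of_ne (by decide)
  have pd10 : pderiv (1:Fin 3) (X (0:Fin 3) : RP3) = 0 := pderiv_X_of_ne (by decide)
  have pd12 : pderiv (1:Fin 3) (X (2:Fin 3) : RP3) = 0 := pderiv_X_of_ne (by decide)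
  have pd20 : pderiv (2:Fin 3) (X (0:Fin 3) : RP3) = 0 := pderiv_X_of_ne (by decide)
  have pd21 : pderiv (2:Fin 3) (X (1:Fin 3) : RP3) = 0 := pderiv_X_of_ne (by decide)
  fin_cases k
  · show pderiv 1 (pcross v 2) - pderiv 2 (pcross v 1) = 2 * v 0 + Dop (v 0)
    simp only [pcross, Dop, Fin.sum_univ_three, Matrix.cons_val_zero, Matrix.cons_val_one,
      Matrix.head_cons, Matrix.cons_val_two, Matrix.tail_cons, map_sub, pderiv_mul,
      pderiv_X_self, pd01, pd02, pd10, pd12, pd20, pd21, mul_one, mul_zero, add_zero, zero_add]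
    linear_combination (-(X 0 : RP3)) * hdiv
  · show pderiv 2 (pcross v 0) - pderiv 0 (pcross v 2) = 2 * v 1 + Dop (v 1)
    simp only [pcross, Dop, Fin.sum_univ_three, Matrix.cons_val_zero, Matrix.cons_val_one,
      Matrix.head_cons, Matrix.cons_val_two, Matrix.tail_cons, map_sub, pderiv_mul,
      pderiv_X_self, pd01, pd02, pd10, pd12, pd20, pd21, mul_one, mul_zero, add_zero, zero_add]
    linear_combination (-(X 1 : RP3)) * hdiv
  · show pderiv 0 (pcross v 1) - pderiv 1 (pcross v 0) = 2 * v 2 + Dop (v 2)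
    simp only [pcross, Dop, Fin.sum_univ_three, Matrix.cons_val_zero, Matrix.cons_val_one,
      Matrix.head_cons, Matrix.cons_val_two, Matrix.tail_cons, map_sub, pderiv_mul,
      pderiv_X_self, pd01, pd02, pd10, pd12, pd20, pd21, mul_one, mul_zero, add_zero, zero_add]
    linear_combination (-(X 2 : RP3)) * hdiv

lemma hC6_one : (C (6⁻¹:ℝ) : RP3) * 6 = 1 := by
  have h6 : (6:RP3) = C (6:ℝ) := (map_ofNat C 6).symm
  rw [h6, ← C_mul]
  norm_num

lemma curl_homotopy (v : Fin 3 → RP3) (hdeg : ∀ i, (v i).totalDegree ≤ 1)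
    (hdiv : pderiv 0 (v 0) + pderiv 1 (v 1) + pderiv 2 (v 2) = 0) (k : Fin 3) :
    pcurl (fun j => C (6⁻¹:ℝ) * (4 * pcross v j - Dop (pcross v j))) k = v k := by
  have h4 : (4:RP3) = C (4:ℝ) := (map_ofNat C 4).symm
  have h2 : (2:RP3) = C (2:ℝ) := (map_ofNat C 2).symm
  have hc := curl_cross v hdiv k
  rw [pcurl_apply] at hc
  have hsq : Dop (Dop (v k)) = Dop (v k) := Dop_sq (hdeg k)
  have hDc : Dop (pderiv (k+1) (pcross v (k+2))) - Dop (pderiv (k+2) (pcross v (k+1)))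
      = 3 * Dop (v k) := by
    have h := congrArg Dop hc
    rw [Dop_sub, Dop_add, h2, Dop_C_mul, ← h2, hsq] at h
    linear_combination h
  rw [pcurl_apply]
  rw [pderiv_C_mul, pderiv_C_mul, map_sub, map_sub, h4, pderiv_C_mul, pderiv_C_mul, ← h4,
    pderiv_Dop, pderiv_Dop]
  linear_combination (3 * (C (6⁻¹:ℝ) : RP3)) * hc - (C (6⁻¹:ℝ) : RP3) * hDc + v k * hC6_one

lemma tdC_mul (a : ℝ) (p : RP3) : (C a * p).totalDegree ≤ p.totalDegree :=
  (totalDegree_mul _ _).trans (by rw [totalDegree_C]; omega)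

lemma td_ofNat_mul (n : ℕ) [n.AtLeastTwo] (p : RP3) :
    ((OfNat.ofNat n : RP3) * p).totalDegree ≤ p.totalDegree := by
  rw [show (OfNat.ofNat n : RP3) = C (OfNat.ofNat n : ℝ) from (map_ofNat C n).symm]
  exact tdC_mul _ p

set_option maxHeartbeats 1000000 in
/-- Exactness of the complete polynomial de Rham complex
`ℝ ⊆ P₃ → (P₂)³ → (P₁)³ → P₀ → 0` on ℝ³. -/
theorem complete_polynomial_complex_exact :
    (∀ φ : RP3, φ.totalDegree ≤ 3 →
      (∀ i, (pgrad φ i).totalDegree ≤ 2) ∧ (pgrad φ = 0 ↔ ∃ c : ℝ, φ = C c))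
    ∧ (∀ v : Fin 3 → RP3, (∀ i, (v i).totalDegree ≤ 2) →
      (∀ i, (pcurl v i).totalDegree ≤ 1) ∧
        (pcurl v = 0 → ∃ φ : RP3, φ.totalDegree ≤ 3 ∧ v = pgrad φ))
    ∧ (∀ v : Fin 3 → RP3, (∀ i, (v i).totalDegree ≤ 1) →
      (pdiv v).totalDegree = 0 ∧
        (pdiv v = 0 → ∃ w : Fin 3 → RP3, (∀ i, (w i).totalDegree ≤ 2) ∧ v = pcurl w))
    ∧ (∀ c : ℝ, ∃ v : Fin 3 → RP3, (∀ i, (v i).totalDegree ≤ 1) ∧ pdiv v = C c) := by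
  refine ⟨?_, ?_, ?_, ?_⟩
  · -- Part 1
    intro φ h
    constructor
    · intro i
      exact totalDegree_pderiv_le i (show φ.totalDegree ≤ 2 + 1 by omega)
    · constructor
      · intro h0
        refine ⟨coeff 0 φ, ?_⟩
        have hz : ∀ i, pderiv i φ = 0 := by
          intro i
          have := congrFun h0 i
          simpa [pgrad] using this
        have hD : Dop φ = 0 := by simp [Dop, hz]
        apply MvPolynomial.ext
        intro m
        rcases eq_or_ne m 0 with rfl | hm
        · simp [coeff_C]
        · have h1 : (degF m : ℝ) * coeff m φ = 0 := by rw [← coeff_Dop, hD, coeff_zero]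
          have h2 : degF m ≠ 0 := by
            obtain ⟨a, ha⟩ := Finsupp.ne_iff.mp hm
            have ha' : m a ≠ 0 := by simpa using ha
            have hle : m a ≤ degF m := Finset.single_le_sum (f := fun j => m j)
              (fun _ _ => Nat.zero_le _) (Finset.mem_univ a)
            omega
          have hc0 : coeff m φ = 0 := by
            rcases mul_eq_zero.mp h1 with hh | hh
            · exact absurd (Nat.cast_eq_zero.mp hh) h2
            · exact hh
          rw [hc0, coeff_C, if_neg fun hh => hm hh.symm]
      · rintro ⟨c, rfl⟩
        funext i
        simp [pgrad]
  · -- Part 2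
    intro v hdeg
    constructor
    · intro i
      rw [pcurl_apply]
      refine (totalDegree_sub _ _).trans (max_le
        (totalDegree_pderiv_le _ (show (v (i+2)).totalDegree ≤ 1 + 1 by have := hdeg (i+2); omega))
        (totalDegree_pderiv_le _ (show (v (i+1)).totalDegree ≤ 1 + 1 by have := hdeg (i+1); omega)))
    · intro hcurl
      have h0 : pderiv 1 (v 2) = pderiv 2 (v 1) := by
        have := congrFun hcurl 0
        simp only [pcurl, Matrix.cons_val_zero, Pi.zero_apply] at this
        exact sub_eq_zero.mp this
      have h1 : pderiv 2 (v 0) = pderiv 0 (v 2) := by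
        have := congrFun hcurl 1
        simp only [pcurl, Matrix.cons_val_one, Matrix.head_cons, Pi.zero_apply] at this
        exact sub_eq_zero.mp this
      have h2 : pderiv 0 (v 1) = pderiv 1 (v 0) := by
        have := congrFun hcurl 2
        simp only [pcurl, Matrix.cons_val_two, Matrix.tail_cons, Matrix.head_cons,
          Pi.zero_apply] at this
        exact sub_eq_zero.mp this
      have hsym : ∀ a b, pderiv a (v b) = pderiv b (v a) := by
        intro a b
        fin_cases a <;> fin_cases b <;>
          first
            | rfl
            | exact h0 | exact h0.symm | exact h1 | exact h1.symm
            | exact h2 | exact h2.symm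
      refine ⟨C (6⁻¹:ℝ) * (Dop (Dop (∑ i, X i * v i)) - 6 * Dop (∑ i, X i * v i)
        + 11 * (∑ i, X i * v i)), ?_, ?_⟩
      · have hq : (∑ i, X i * v i).totalDegree ≤ 3 := by
          refine (totalDegree_finset_sum _ _).trans (Finset.sup_le fun i _ => ?_)
          refine (totalDegree_mul _ _).trans ?_
          rw [totalDegree_X]
          have := hdeg i
          omega
        refine (tdC_mul _ _).trans ?_
        refine (totalDegree_add _ _).trans (max_le ?_ ?_)
        · refine (totalDegree_sub _ _).trans (max_le ?_ ?_)
          · exact ((totalDegree_Dop_le _).trans (totalDegree_Dop_le _)).trans hq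
          · exact (td_ofNat_mul 6 _).trans ((totalDegree_Dop_le _).trans hq)
        · exact (td_ofNat_mul 11 _).trans hq
      · funext j
        show v j = pderiv j _
        rw [pderiv_C_mul, grad_homotopy v hdeg hsym j]
        linear_combination (-(v j)) * hC6_one
  · -- Part 3
    intro v hdeg
    constructor
    · have hle : (pdiv v).totalDegree ≤ 0 := by
        rw [pdiv]
        refine (totalDegree_finset_sum _ _).trans (Finset.sup_le fun i _ => ?_)
        exact totalDegree_pderiv_le i (show (v i).totalDegree ≤ 0 + 1 by have := hdeg i; omega)
      omega
    · intro hdiv0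
      have hdiv : pderiv 0 (v 0) + pderiv 1 (v 1) + pderiv 2 (v 2) = 0 := by
        rw [pdiv, Fin.sum_univ_three] at hdiv0
        exact hdiv0
      refine ⟨fun j => C (6⁻¹:ℝ) * (4 * pcross v j - Dop (pcross v j)), ?_, ?_⟩
      · intro i
        have hr : (pcross v i).totalDegree ≤ 2 := by
          have hb : ∀ a b : Fin 3, (v a * X b : RP3).totalDegree ≤ 2 := by
            intro a b
            refine (totalDegree_mul _ _).trans ?_
            rw [totalDegree_X]
            have := hdeg a
            omega
          fin_cases i <;>
            exact (totalDegree_sub _ _).trans (max_le (hb _ _) (hb _ _))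
        refine (tdC_mul _ _).trans ?_
        refine (totalDegree_sub _ _).trans (max_le ?_ ?_)
        · exact (td_ofNat_mul 4 _).trans hr
        · exact (totalDegree_Dop_le _).trans hr
      · funext k
        exact (curl_homotopy v hdeg hdiv k).symm
  · -- Part 4
    intro c
    refine ⟨![C c * X 0, 0, 0], ?_, ?_⟩
    · intro i
      fin_cases i
      · show (C c * X 0 : RP3).totalDegree ≤ 1
        refine (totalDegree_mul _ _).trans ?_
        rw [totalDegree_C, totalDegree_X]
      · show (0:RP3).totalDegree ≤ 1
        rw [totalDegree_zero]
        omega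
      · show (0:RP3).totalDegree ≤ 1
        rw [totalDegree_zero]
        omega
    · rw [pdiv, Fin.sum_univ_three]
      show pderiv 0 (C c * X 0) + pderiv 1 (0:RP3) + pderiv 2 (0:RP3) = C c
      rw [pderiv_C_mul, pderiv_X_self, map_zero, map_zero, mul_one, add_zero, add_zero]
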